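/- Let p, q, r, c₀ be real numbers, let θ be a positive even integer, and let n ≠ m be integers with n, m ≥ 1 and max(n, m) < p − (θ+1)/2. Suppose yₙ, yₘ : ℝ → ℝ are polynomial functions of degrees exactly n and m respectively, such that for i ∈ {n, m} and all real x: (x−r)(1+x²)yᵢ''(x) + ((θ+2−2p)x² + (q+2r(p−1))x + θ − rq)yᵢ'(x) − (i(i+1+θ−2p)(x−r) + c₀)yᵢ(x) = 0. Then ∫_{−∞}^{∞} (x−r)^θ (1+x²)^{−p} exp(q·arctan x) yₙ(x) yₘ(x) dx = 0. -/

import Mathlib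

open Real Filter Topology MeasureTheory Set Polynomial

section Aux

private lemma absPowLe (x : ℝ) {i d : ℕ} (hid : i ≤ d) :
    |x| ^ i ≤ (1 + x ^ 2) ^ ((d : ℝ) / 2) := by
  have h1 : (0:ℝ) < 1 + x ^ 2 := by positivity
  have h2 : |x| ≤ (1 + x ^ 2) ^ ((1:ℝ)/2) := by
    rw [← Real.sqrt_eq_rpow, ← Real.sqrt_sq_eq_abs]
    exact Real.sqrt_le_sqrt (by nlinarith)
  calc |x| ^ i ≤ ((1 + x ^ 2) ^ ((1:ℝ)/2)) ^ i := pow_le_pow_left₀ (abs_nonneg x) h2 i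
    _ = (1 + x ^ 2) ^ ((i : ℝ)/2) := by
        rw [← Real.rpow_natCast ((1+x^2) ^ ((1:ℝ)/2)) i, ← Real.rpow_mul h1.le]
        congr 1
        ring
    _ ≤ (1 + x ^ 2) ^ ((d : ℝ)/2) := by
        apply Real.rpow_le_rpow_of_exponent_le (by nlinarith)
        have : (i:ℝ) ≤ (d:ℝ) := by exact_mod_cast hid
        linarith

private lemma poly_growth (R : Polynomial ℝ) :
    ∃ C : ℝ, 0 ≤ C ∧ ∀ x : ℝ, |R.eval x| ≤ C * (1 + x ^ 2) ^ ((R.natDegree : ℝ) / 2) := by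
  refine ⟨∑ i ∈ Finset.range (R.natDegree + 1), |R.coeff i|,
    Finset.sum_nonneg fun _ _ => abs_nonneg _, fun x => ?_⟩
  rw [Polynomial.eval_eq_sum_range, Finset.sum_mul]
  refine (Finset.abs_sum_le_sum_abs _ _).trans (Finset.sum_le_sum fun i hi => ?_)
  rw [abs_mul, abs_pow]
  exact mul_le_mul_of_nonneg_left
    (absPowLe x (Nat.lt_succ_iff.mp (Finset.mem_range.mp hi))) (abs_nonneg _)

private lemma exp_arctan_bound (q x : ℝ) :
    Real.exp (q * Real.arctan x) ≤ Real.exp (|q| * (Real.pi / 2)) := by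
  apply Real.exp_le_exp.mpr
  calc q * Real.arctan x ≤ |q * Real.arctan x| := le_abs_self _
    _ = |q| * |Real.arctan x| := abs_mul _ _
    _ ≤ |q| * (Real.pi/2) := by
        apply mul_le_mul_of_nonneg_left _ (abs_nonneg q)
        exact abs_le.mpr ⟨(Real.neg_pi_div_two_lt_arctan x).le, (Real.arctan_lt_pi_div_two x).le⟩

private lemma tendsto_one_add_sq_rpow_top {s : ℝ} (hs : s < 0) :
    Tendsto (fun x : ℝ => (1 + x ^ 2) ^ s) atTop (𝓝 0) := by
  have key : Tendsto (fun y : ℝ => y ^ s) atTop (𝓝 0) := by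
    have := tendsto_rpow_neg_atTop (y := -s) (by linarith)
    simpa using this
  have htop : Tendsto (fun x : ℝ => 1 + x ^ 2) atTop atTop :=
    tendsto_atTop_add_const_left _ 1 (tendsto_pow_atTop two_ne_zero)
  exact key.comp htop

private lemma tendsto_one_add_sq_rpow_bot {s : ℝ} (hs : s < 0) :
    Tendsto (fun x : ℝ => (1 + x ^ 2) ^ s) atBot (𝓝 0) := by
  have key : Tendsto (fun y : ℝ => y ^ s) atTop (𝓝 0) := by
    have := tendsto_rpow_neg_atTop (y := -s) (by linarith)
    simpa using this
  have hbot : Tendsto (fun x : ℝ => 1 + x ^ 2) atBot atTop := by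
    have h1 : Tendsto (fun x : ℝ => 1 + |x| ^ 2) atBot atTop :=
      tendsto_atTop_add_const_left _ 1
        ((tendsto_pow_atTop two_ne_zero).comp tendsto_abs_atBot_atTop)
    exact h1.congr (fun x => by rw [sq_abs])
  exact key.comp hbot
end Aux

/-- Finite orthogonality of the third finite sequence of exceptional X₁-orthogonal
polynomials on (-∞,∞) with respect to the weight
`(x-r)^θ (1+x²)^{-p} exp(q·arctan x)`. -/
theorem x1_finite_tstudent_orthogonality
    (p q r c0 : ℝ)
    (θ : ℕ) (hθpos : 0 < θ) (hθeven : Even θ)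
    (n m : ℤ) (hn : 1 ≤ n) (hm : 1 ≤ m) (hnm : n ≠ m)
    (hdeg : ((max n m : ℤ) : ℝ) < p - (θ + 1) / 2)
    (yn ym : ℝ → ℝ)
    (hynpoly : ∃ P : Polynomial ℝ, (∀ x, yn x = P.eval x) ∧ (P.natDegree : ℤ) = n)
    (hympoly : ∃ P : Polynomial ℝ, (∀ x, ym x = P.eval x) ∧ (P.natDegree : ℤ) = m)
    (heqn : ∀ x : ℝ,
      (x - r) * (1 + x ^ 2) * deriv (deriv yn) x
        + ((θ + 2 - 2 * p) * x ^ 2 + (q + 2 * r * (p - 1)) * x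
            + θ - r * q) * deriv yn x
        - ((n : ℝ) * ((n : ℝ) + 1 + θ - 2 * p) * (x - r) + c0) * yn x = 0)
    (heqm : ∀ x : ℝ,
      (x - r) * (1 + x ^ 2) * deriv (deriv ym) x
        + ((θ + 2 - 2 * p) * x ^ 2 + (q + 2 * r * (p - 1)) * x
            + θ - r * q) * deriv ym x
        - ((m : ℝ) * ((m : ℝ) + 1 + θ - 2 * p) * (x - r) + c0) * ym x = 0) :
    ∫ x : ℝ,
      (x - r) ^ θ * (1 + x ^ 2) ^ (-p) * Real.exp (q * Real.arctan x)
        * yn x * ym x = 0 := by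
  obtain ⟨P, hP, hPdeg⟩ := hynpoly
  obtain ⟨Q, hQ, hQdeg⟩ := hympoly
  have hyn : yn = fun x => P.eval x := funext hP
  have hym : ym = fun x => Q.eval x := funext hQ
  subst hyn hym
  have hdP : deriv (fun x : ℝ => P.eval x) = fun x => P.derivative.eval x :=
    funext fun _ => Polynomial.deriv _
  have hdQ : deriv (fun x : ℝ => Q.eval x) = fun x => Q.derivative.eval x :=
    funext fun _ => Polynomial.deriv _
  simp only [hdP, hdQ] at heqn heqm
  simp only [Polynomial.deriv] at heqn heqm
  -- numeric facts
  have hPn : (P.natDegree : ℝ) = (n : ℝ) := by exact_mod_cast hPdeg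
  have hQm : (Q.natDegree : ℝ) = (m : ℝ) := by exact_mod_cast hQdeg
  have hsumZ : n + m + 1 ≤ 2 * max n m := by
    rcases le_total n m with h | h
    · rw [max_eq_right h]; omega
    · rw [max_eq_left h]; omega
  have hmaxR : ((max n m : ℤ) : ℝ) < p - (θ + 1) / 2 := hdeg
  have hsumR : (n : ℝ) + (m : ℝ) + 1 ≤ 2 * ((max n m : ℤ) : ℝ) := by exact_mod_cast hsumZ
  have hB : (n : ℝ) + (m : ℝ) + (θ : ℝ) < 2 * p - 2 := by
    push_cast at hmaxR hsumR ⊢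
    linarith
  have hA : (n : ℝ) + (m : ℝ) + 1 + (θ : ℝ) - 2 * p < 0 := by linarith
  have hΔ : (n : ℝ) * ((n : ℝ) + 1 + θ - 2 * p) - (m : ℝ) * ((m : ℝ) + 1 + θ - 2 * p) ≠ 0 := by
    have hfac : (n : ℝ) * ((n : ℝ) + 1 + θ - 2 * p) - (m : ℝ) * ((m : ℝ) + 1 + θ - 2 * p)
        = ((n : ℝ) - (m : ℝ)) * ((n : ℝ) + (m : ℝ) + 1 + θ - 2 * p) := by ring
    rw [hfac]
    refine mul_ne_zero (sub_ne_zero.mpr ?_) (ne_of_lt hA)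
    exact_mod_cast hnm
  -- the polynomials
  set S : Polynomial ℝ := (X - C r) ^ θ * (P.derivative * Q - P * Q.derivative) with hSdef
  set R : Polynomial ℝ := (X - C r) ^ θ * (P * Q) with hRdef
  have hXrC : ((X - C r : Polynomial ℝ) ^ θ).natDegree ≤ θ := by
    apply (Polynomial.natDegree_pow_le).trans
    simp [Polynomial.natDegree_X_sub_C]
  have hRd : R.natDegree ≤ θ + (P.natDegree + Q.natDegree) := by
    apply (Polynomial.natDegree_mul_le).trans
    exact add_le_add hXrC Polynomial.natDegree_mul_le
  have hSd : S.natDegree ≤ θ + (P.natDegree + Q.natDegree) := by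
    apply (Polynomial.natDegree_mul_le).trans
    apply add_le_add hXrC
    apply (Polynomial.natDegree_sub_le _ _).trans
    apply max_le
    · exact (Polynomial.natDegree_mul_le).trans
        (add_le_add ((Polynomial.natDegree_derivative_le P).trans (Nat.sub_le _ _)) le_rfl)
    · exact (Polynomial.natDegree_mul_le).trans
        (add_le_add le_rfl ((Polynomial.natDegree_derivative_le Q).trans (Nat.sub_le _ _)))
  have hRdR : (R.natDegree : ℝ) ≤ θ + ((n:ℝ) + (m:ℝ)) := by
    have := (Nat.cast_le (α := ℝ)).mpr hRd
    push_cast at this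
    rw [hPn, hQm] at this
    linarith
  have hSdR : (S.natDegree : ℝ) ≤ θ + ((n:ℝ) + (m:ℝ)) := by
    have := (Nat.cast_le (α := ℝ)).mpr hSd
    push_cast at this
    rw [hPn, hQm] at this
    linarith
  have hexpR : (R.natDegree : ℝ) / 2 + (-p) ≤ -1 := by linarith
  have hexpS : (S.natDegree : ℝ) / 2 + (1 - p) < 0 := by linarith
  -- key derivative identity
  have key : ∀ x : ℝ, HasDerivAt
      (fun y : ℝ => (1 + y ^ 2) ^ ((1:ℝ) - p) * Real.exp (q * Real.arctan y) * S.eval y)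
      (((n : ℝ) * ((n : ℝ) + 1 + θ - 2 * p) - (m : ℝ) * ((m : ℝ) + 1 + θ - 2 * p)) *
        ((x - r) ^ θ * (1 + x ^ 2) ^ (-p) * Real.exp (q * Real.arctan x)
          * P.eval x * Q.eval x)) x := by
    intro x
    have h1pos : (0:ℝ) < 1 + x ^ 2 := by positivity
    have hin : HasDerivAt (fun y : ℝ => 1 + y ^ 2) (2 * x) x := by
      simpa using (hasDerivAt_pow 2 x).const_add 1
    have h1 : HasDerivAt (fun y : ℝ => (1 + y ^ 2) ^ ((1:ℝ) - p))
        (2 * x * ((1:ℝ) - p) * (1 + x ^ 2) ^ ((1:ℝ) - p - 1)) x :=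
      hin.rpow_const (Or.inl h1pos.ne')
    have h2 : HasDerivAt (fun y : ℝ => Real.exp (q * Real.arctan y))
        (Real.exp (q * Real.arctan x) * (q * (1 / (1 + x ^ 2)))) x :=
      ((Real.hasDerivAt_arctan x).const_mul q).exp
    have h3 : HasDerivAt (fun y : ℝ => S.eval y) (S.derivative.eval x) x := S.hasDerivAt x
    have hD := (h1.mul h2).mul h3
    refine hD.congr_deriv (Eq.symm ?_)
    have er1 : ((1:ℝ) + x ^ 2) ^ ((1:ℝ) - p) = (1 + x ^ 2) * (1 + x ^ 2) ^ (-p) := by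
      rw [show (1:ℝ) - p = 1 + (-p) by ring, Real.rpow_add h1pos, Real.rpow_one]
    have er2 : ((1:ℝ) + x ^ 2) ^ ((1:ℝ) - p - 1) = (1 + x ^ 2) ^ (-p) := by
      rw [show (1:ℝ) - p - 1 = -p by ring]
    have er3 : (x - r) ^ θ = (x - r) * (x - r) ^ (θ - 1) := by
      conv_lhs => rw [← Nat.succ_pred_eq_of_pos hθpos]
      rw [pow_succ, Nat.pred_eq_sub_one]
      ring
    have hinv : (1 + x ^ 2) * (1 + x ^ 2)⁻¹ = 1 := mul_inv_cancel₀ h1pos.ne'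
    simp only [hSdef, Polynomial.derivative_mul, Polynomial.derivative_pow,
      Polynomial.derivative_sub, Polynomial.derivative_X, Polynomial.derivative_C,
      Polynomial.eval_mul, Polynomial.eval_add, Polynomial.eval_sub, Polynomial.eval_pow,
      Polynomial.eval_X, Polynomial.eval_C, Polynomial.eval_natCast, Polynomial.eval_one,
      Polynomial.eval_zero, Pi.mul_apply]
    rw [er1, er2, er3]
    linear_combination
      (-((x - r) ^ (θ - 1) * (1 + x ^ 2) ^ (-p) * Real.exp (q * Real.arctan x)
          * Q.eval x)) * heqn x
      + ((x - r) ^ (θ - 1) * (1 + x ^ 2) ^ (-p) * Real.exp (q * Real.arctan x)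
          * P.eval x) * heqm x
      + (-((1 + x ^ 2) ^ (-p) * Real.exp (q * Real.arctan x) * q * (x - r)
          * (x - r) ^ (θ - 1)
          * (P.derivative.eval x * Q.eval x - P.eval x * Q.derivative.eval x))) * hinv
  -- integrability
  have hGint : Integrable (fun x : ℝ =>
      (x - r) ^ θ * (1 + x ^ 2) ^ (-p) * Real.exp (q * Real.arctan x)
        * P.eval x * Q.eval x) := by
    obtain ⟨CR, hCR0, hCRb⟩ := poly_growth R
    have hK0 : (0:ℝ) < Real.exp (|q| * (Real.pi / 2)) := Real.exp_pos _
    have hb : ∀ x : ℝ, |(x - r) ^ θ * (1 + x ^ 2) ^ (-p) * Real.exp (q * Real.arctan x)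
        * P.eval x * Q.eval x| ≤ CR * Real.exp (|q| * (Real.pi / 2)) * (1 + x ^ 2)⁻¹ := by
      intro x
      have h1pos : (0:ℝ) < 1 + x ^ 2 := by positivity
      have hre : (x - r) ^ θ * (1 + x ^ 2) ^ (-p) * Real.exp (q * Real.arctan x)
          * P.eval x * Q.eval x
          = R.eval x * ((1 + x ^ 2) ^ (-p) * Real.exp (q * Real.arctan x)) := by
        simp only [hRdef, Polynomial.eval_mul, Polynomial.eval_pow, Polynomial.eval_sub,
          Polynomial.eval_X, Polynomial.eval_C]
        ring
      rw [hre, abs_mul]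
      have h2 : |(1 + x ^ 2) ^ (-p) * Real.exp (q * Real.arctan x)|
          ≤ (1 + x ^ 2) ^ (-p) * Real.exp (|q| * (Real.pi / 2)) := by
        rw [abs_mul, abs_of_nonneg (Real.rpow_nonneg h1pos.le _),
          abs_of_nonneg (Real.exp_pos _).le]
        exact mul_le_mul_of_nonneg_left (exp_arctan_bound q x) (Real.rpow_nonneg h1pos.le _)
      calc |R.eval x| * |(1 + x ^ 2) ^ (-p) * Real.exp (q * Real.arctan x)|
          ≤ (CR * (1 + x ^ 2) ^ ((R.natDegree : ℝ)/2))
            * ((1 + x ^ 2) ^ (-p) * Real.exp (|q| * (Real.pi / 2))) :=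
            mul_le_mul (hCRb x) h2 (abs_nonneg _)
              (by positivity)
        _ = CR * Real.exp (|q| * (Real.pi / 2))
            * ((1 + x ^ 2) ^ ((R.natDegree : ℝ)/2) * (1 + x ^ 2) ^ (-p)) := by ring
        _ = CR * Real.exp (|q| * (Real.pi / 2))
            * (1 + x ^ 2) ^ ((R.natDegree : ℝ)/2 + (-p)) := by rw [← Real.rpow_add h1pos]
        _ ≤ CR * Real.exp (|q| * (Real.pi / 2)) * (1 + x ^ 2) ^ (-1 : ℝ) := by
            apply mul_le_mul_of_nonneg_left
              (Real.rpow_le_rpow_of_exponent_le (by nlinarith) hexpR) (by positivity)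
        _ = CR * Real.exp (|q| * (Real.pi / 2)) * (1 + x ^ 2)⁻¹ := by rw [Real.rpow_neg_one]
    refine (integrable_inv_one_add_sq.const_mul
      (CR * Real.exp (|q| * (Real.pi / 2)))).mono' ?_ ?_
    · apply Continuous.aestronglyMeasurable
      have c1 : Continuous (fun x : ℝ => (1 + x ^ 2) ^ (-p)) := by
        apply Continuous.rpow_const (continuous_const.add (continuous_pow 2))
        intro x; left; exact (show (0:ℝ) < 1 + x ^ 2 by positivity).ne'
      exact (((((continuous_id.sub continuous_const).pow θ).mul c1).mul
        (Real.continuous_exp.comp (continuous_const.mul Real.continuous_arctan))).mul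
          P.continuous).mul Q.continuous
    · filter_upwards with x
      rw [Real.norm_eq_abs]
      exact hb x
  -- limits of F
  obtain ⟨CS, hCS0, hCSb⟩ := poly_growth S
  have hbF : ∀ x : ℝ, ‖(1 + x ^ 2) ^ ((1:ℝ) - p) * Real.exp (q * Real.arctan x) * S.eval x‖
      ≤ CS * Real.exp (|q| * (Real.pi / 2))
        * (1 + x ^ 2) ^ ((S.natDegree : ℝ)/2 + (1 - p)) := by
    intro x
    have h1pos : (0:ℝ) < 1 + x ^ 2 := by positivity
    rw [Real.norm_eq_abs, abs_mul, abs_mul,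
      abs_of_nonneg (Real.rpow_nonneg h1pos.le _), abs_of_nonneg (Real.exp_pos _).le]
    calc (1 + x ^ 2) ^ ((1:ℝ) - p) * Real.exp (q * Real.arctan x) * |S.eval x|
        ≤ (1 + x ^ 2) ^ ((1:ℝ) - p) * Real.exp (|q| * (Real.pi / 2))
          * (CS * (1 + x ^ 2) ^ ((S.natDegree : ℝ)/2)) := by
          apply mul_le_mul
          · exact mul_le_mul_of_nonneg_left (exp_arctan_bound q x) (Real.rpow_nonneg h1pos.le _)
          · exact hCSb x
          · exact abs_nonneg _
          · positivity
      _ = CS * Real.exp (|q| * (Real.pi / 2))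
          * ((1 + x ^ 2) ^ ((S.natDegree : ℝ)/2) * (1 + x ^ 2) ^ ((1:ℝ) - p)) := by ring
      _ = CS * Real.exp (|q| * (Real.pi / 2))
          * (1 + x ^ 2) ^ ((S.natDegree : ℝ)/2 + (1 - p)) := by rw [← Real.rpow_add h1pos]
  have hlimC : ∀ l : Filter ℝ,
      Tendsto (fun x : ℝ => (1 + x ^ 2) ^ ((S.natDegree : ℝ)/2 + (1 - p))) l (𝓝 0) →
      Tendsto (fun y : ℝ => (1 + y ^ 2) ^ ((1:ℝ) - p) * Real.exp (q * Real.arctan y)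
        * S.eval y) l (𝓝 0) := by
    intro l hl
    apply squeeze_zero_norm hbF
    have := hl.const_mul (CS * Real.exp (|q| * (Real.pi / 2)))
    simpa using this
  have hFtop : Tendsto
      (fun y : ℝ => (1 + y ^ 2) ^ ((1:ℝ) - p) * Real.exp (q * Real.arctan y) * S.eval y)
      atTop (𝓝 0) := by
    exact hlimC _ (tendsto_one_add_sq_rpow_top hexpS)
  have hFbot : Tendsto
      (fun y : ℝ => (1 + y ^ 2) ^ ((1:ℝ) - p) * Real.exp (q * Real.arctan y) * S.eval y)
      atBot (𝓝 0) := by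
    exact hlimC _ (tendsto_one_add_sq_rpow_bot hexpS)
  -- conclusion
  have hInt' : Integrable (fun x : ℝ =>
      ((n : ℝ) * ((n : ℝ) + 1 + θ - 2 * p) - (m : ℝ) * ((m : ℝ) + 1 + θ - 2 * p)) *
        ((x - r) ^ θ * (1 + x ^ 2) ^ (-p) * Real.exp (q * Real.arctan x)
          * P.eval x * Q.eval x)) := hGint.const_mul _
  have hIic := integral_Iic_of_hasDerivAt_of_tendsto' (a := (0:ℝ))
    (fun x _ => key x) hInt'.integrableOn hFbot
  have hIoi := integral_Ioi_of_hasDerivAt_of_tendsto' (a := (0:ℝ))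
    (fun x _ => key x) hInt'.integrableOn hFtop
  have htot := intervalIntegral.integral_Iic_add_Ioi (b := (0:ℝ)) hInt'.integrableOn hInt'.integrableOn
  rw [hIic, hIoi] at htot
  have h0 : ∫ x : ℝ,
      ((n : ℝ) * ((n : ℝ) + 1 + θ - 2 * p) - (m : ℝ) * ((m : ℝ) + 1 + θ - 2 * p)) *
        ((x - r) ^ θ * (1 + x ^ 2) ^ (-p) * Real.exp (q * Real.arctan x)
          * P.eval x * Q.eval x) = 0 := by
    rw [← htot]; ring
  rw [MeasureTheory.integral_const_mul] at h0
  exact (mul_eq_zero.mp h0).resolve_left hΔ
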